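/- arXiv:2510.08467 — 4 statements merged into one kernel-verified Lean document; each statement's English description precedes it below -/
import Mathlib

section
/- For all D×D complex matrices H and H′ and all t ∈ ℝ, Duhamel's formula holds: exp(itH) − exp(itH′) = i ∫_0^t exp(i(t−s)H) · (H − H′) · exp(isH′) ds. -/
open scoped Matrix
open NormedSpace

/-- **Duhamel's formula** for matrix exponentials, stated componentwise:
for all `D × D` complex matrices `H`, `H'` and all `t ∈ ℝ`,
`exp(itH) − exp(itH') = i ∫_0^t exp(i(t−s)H) (H − H') exp(isH') ds`. -/
theorem duhamel_formula {D : ℕ} (H H' : Matrix (Fin D) (Fin D) ℂ) (t : ℝ) :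
    ∀ i j : Fin D,
      (NormedSpace.exp ((Complex.I * (t : ℂ)) • H)
        - NormedSpace.exp ((Complex.I * (t : ℂ)) • H')) i j =
      Complex.I *
        ∫ s in (0:ℝ)..t,
          (NormedSpace.exp ((Complex.I * ((t - s : ℝ) : ℂ)) • H) *
              (H - H') *
            NormedSpace.exp ((Complex.I * ((s : ℝ) : ℂ)) • H')) i j := by
  intro i j
  letI : SeminormedRing (Matrix (Fin D) (Fin D) ℂ) := Matrix.linftyOpSemiNormedRing
  letI : NormedRing (Matrix (Fin D) (Fin D) ℂ) := Matrix.linftyOpNormedRing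
  letI : NormedAlgebra ℂ (Matrix (Fin D) (Fin D) ℂ) := Matrix.linftyOpNormedAlgebra
  letI : CompleteSpace (Matrix (Fin D) (Fin D) ℂ) := FiniteDimensional.complete ℂ _
  have hrw : ∀ (c : ℂ) (X : Matrix (Fin D) (Fin D) ℂ),
      (Complex.I * c) • X = c • (Complex.I • X) := fun c X => by
    rw [smul_smul, mul_comm]
  simp only [hrw, Complex.ofReal_sub]
  set A := Complex.I • H with hA
  set B := Complex.I • H' with hB
  -- entry evaluation continuous linear map
  let L : Matrix (Fin D) (Fin D) ℂ →L[ℂ] ℂ :=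
    LinearMap.toContinuousLinearMap (Matrix.entryLinearMap ℂ ℂ i j)
  have hL : ∀ X : Matrix (Fin D) (Fin D) ℂ, L X = X i j := fun X => by
    rfl
  have h1 : ∀ s : ℝ, HasDerivAt (fun s : ℝ => exp (((t:ℂ) - s) • A))
      ((-1 : ℂ) • (exp (((t:ℂ) - s) • A) * A)) s := fun s => by
    have hout := hasDerivAt_exp_smul_const (𝕂 := ℂ) A ((t:ℂ) - s)
    have hin : HasDerivAt (fun s : ℝ => (t:ℂ) - (s:ℂ)) (-1) s := by
      simpa using (Complex.ofRealCLM.hasDerivAt (x := s)).const_sub (t:ℂ)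
    exact hout.scomp s hin
  have h2 : ∀ s : ℝ, HasDerivAt (fun s : ℝ => exp ((s:ℂ) • B))
      ((1 : ℂ) • (B * exp ((s:ℂ) • B))) s := fun s => by
    have hout := hasDerivAt_exp_smul_const' (𝕂 := ℂ) B (s:ℂ)
    have hin : HasDerivAt (fun s : ℝ => (s:ℂ)) 1 s := by
      simpa using (hasDerivAt_id s).ofReal_comp
    exact hout.scomp s hin
  set f : ℝ → Matrix (Fin D) (Fin D) ℂ :=
    fun s => exp (((t:ℂ) - s) • A) * exp ((s:ℂ) • B) with hf
  have hder : ∀ s : ℝ, HasDerivAt f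
      ((-Complex.I) • (exp (((t:ℂ) - s) • A) * (H - H') * exp ((s:ℂ) • B))) s := fun s => by
    have h := (h1 s).mul (h2 s)
    refine h.congr_deriv ?_
    symm
    simp only [hA, hB, one_smul, mul_smul_comm, smul_mul_assoc, mul_sub, sub_mul, mul_assoc]
    module
  have c1 : Continuous fun s : ℝ => exp (((t:ℂ) - s) • A) :=
    continuous_iff_continuousAt.2 fun s => (h1 s).continuousAt
  have c2 : Continuous fun s : ℝ => exp ((s:ℂ) • B) :=
    continuous_iff_continuousAt.2 fun s => (h2 s).continuousAt
  have hcont : Continuous fun s : ℝ =>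
      exp (((t:ℂ) - s) • A) * (H - H') * exp ((s:ℂ) • B) :=
    (c1.mul continuous_const).mul c2
  have key : (∫ s in (0:ℝ)..t,
      L ((-Complex.I) • (exp (((t:ℂ) - s) • A) * (H - H') * exp ((s:ℂ) • B))))
      = L (f t) - L (f 0) := by
    apply intervalIntegral.integral_eq_sub_of_hasDerivAt
    · intro s _
      exact ((L.restrictScalars ℝ).hasFDerivAt (x := f s)).comp_hasDerivAt s (hder s)
    · have hc : Continuous fun s : ℝ =>
          L ((-Complex.I) • (exp (((t:ℂ) - s) • A) * (H - H') * exp ((s:ℂ) • B))) :=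
        L.continuous.comp (hcont.const_smul (-Complex.I))
      exact hc.intervalIntegrable _ _
  have hft : f t i j = exp ((t:ℂ) • B) i j := by
    simp [hf, sub_self, exp_zero]
  have hf0 : f 0 i j = exp ((t:ℂ) • A) i j := by
    simp [hf, exp_zero]
  simp only [hL, Matrix.smul_apply, smul_eq_mul] at key
  rw [intervalIntegral.integral_const_mul] at key
  rw [hft, hf0] at key
  rw [Matrix.sub_apply]
  linear_combination key
end

section
/- Let H and K be D×D Hermitian complex matrices, let O be a D×D complex matrix, and let t ∈ ℝ. Define U(s) = exp(−isH) and, for s ∈ [0,t], V(t,s) = exp(−i(t−s)K). Then V(t,0)† O V(t,0) − U(t)† O U(t) = i ∫_0^t V(t,s)† · [K − H, U(s)† O U(s)] · V(t,s) ds. -/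
open scoped Matrix
open NormedSpace

set_option maxHeartbeats 1000000

noncomputable section DuhamelAux
attribute [local instance] Matrix.linftyOpNormedRing Matrix.linftyOpNormedAlgebra

variable {D : ℕ}

lemma duh_expDeriv (M : Matrix (Fin D) (Fin D) ℂ) (s : ℝ) :
    HasDerivAt (fun s : ℝ => exp (s • M)) (exp (s • M) * M) s := by
  have h := hasDerivAt_exp_smul_const (𝕂 := ℝ) M s
  exact h

lemma duh_expDeriv' (M : Matrix (Fin D) (Fin D) ℂ) (s : ℝ) :
    HasDerivAt (fun s : ℝ => exp (s • M)) (M * exp (s • M)) s := by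
  have h := hasDerivAt_exp_smul_const' (𝕂 := ℝ) M s
  exact h

lemma duh_expDeriv_neg' (M : Matrix (Fin D) (Fin D) ℂ) (s : ℝ) :
    HasDerivAt (fun s : ℝ => exp ((-s) • M)) (-(M * exp ((-s) • M))) s := by
  have h := (duh_expDeriv' M (-s)).scomp s (hasDerivAt_neg s)
  simp only [Function.comp_def, neg_one_smul, one_smul] at h
  exact h

lemma duh_expDeriv_sub' (M : Matrix (Fin D) (Fin D) ℂ) (t s : ℝ) :
    HasDerivAt (fun s : ℝ => exp ((t - s) • M)) (-(M * exp ((t - s) • M))) s := by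
  have h := (duh_expDeriv' M (t - s)).scomp s ((hasDerivAt_id s).const_sub t)
  simp only [Function.comp_def, neg_one_smul, one_smul] at h
  exact h

lemma duh_expDeriv_sub (M : Matrix (Fin D) (Fin D) ℂ) (t s : ℝ) :
    HasDerivAt (fun s : ℝ => exp ((s - t) • M)) (exp ((s - t) • M) * M) s := by
  have h := (duh_expDeriv M (s - t)).scomp s ((hasDerivAt_id s).sub_const t)
  simp only [Function.comp_def, neg_one_smul, one_smul] at h
  exact h

lemma duh_key (M P O : Matrix (Fin D) (Fin D) ℂ) (t s : ℝ) :
    HasDerivAt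
      (fun s : ℝ => exp ((s - t) • P) *
        (exp ((-s) • M) * O * exp (s • M)) * exp ((t - s) • P))
      (exp ((s - t) • P) *
        ((P - M) * (exp ((-s) • M) * O * exp (s • M)) -
          (exp ((-s) • M) * O * exp (s • M)) * (P - M)) * exp ((t - s) • P)) s := by
  have ha := duh_expDeriv M s
  have hb := duh_expDeriv_neg' M s
  have hc := duh_expDeriv_sub' P t s
  have hd := duh_expDeriv_sub P t s
  have hF := (hd.mul ((hb.mul_const O).mul ha)).mul hc
  refine hF.congr_deriv ?_
  simp only [Pi.mul_apply]
  noncomm_ring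

lemma duh_smul (z : ℂ) (d A c B : Matrix (Fin D) (Fin D) ℂ) :
    d * ((z • B) * A - A * (z • B)) * c = z • (d * (B * A - A * B) * c) := by
  simp only [smul_mul_assoc, mul_smul_comm, ← smul_sub]

def entryCLM (i j : Fin D) : Matrix (Fin D) (Fin D) ℂ →L[ℝ] ℂ :=
  LinearMap.toContinuousLinearMap
    { toFun := fun A => A i j, map_add' := fun _ _ => rfl, map_smul' := fun _ _ => rfl }

/-- **Duhamel's formula for Heisenberg evolution of observables**, stated componentwise.
Let `H`, `K` be `D × D` Hermitian matrices, `O` a `D × D` matrix and `t ∈ ℝ`.  With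
`U s = exp(−isH)` and `V t s = exp(−i(t−s)K)` one has
`V(t,0)† O V(t,0) − U(t)† O U(t) = i ∫_0^t V(t,s)† [K − H, U(s)† O U(s)] V(t,s) ds`. -/
theorem duhamel_heisenberg {D : ℕ} (H K O : Matrix (Fin D) (Fin D) ℂ)
    (hH : H.IsHermitian) (hK : K.IsHermitian) (t : ℝ) :
    letI U : ℝ → Matrix (Fin D) (Fin D) ℂ :=
      fun s => NormedSpace.exp ((-(Complex.I * (s : ℂ))) • H)
    letI V : ℝ → ℝ → Matrix (Fin D) (Fin D) ℂ :=
      fun t s => NormedSpace.exp ((-(Complex.I * ((t - s : ℝ) : ℂ))) • K)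
    ∀ i j : Fin D,
      ((V t 0)ᴴ * O * V t 0 - (U t)ᴴ * O * U t) i j =
      Complex.I *
        ∫ s in (0:ℝ)..t,
          ((V t s)ᴴ *
              ((K - H) * ((U s)ᴴ * O * U s) - ((U s)ᴴ * O * U s) * (K - H)) *
            V t s) i j := by
  intro i j
  have hsmul : ∀ (r : ℝ) (A : Matrix (Fin D) (Fin D) ℂ), r • A = (r : ℂ) • A := by
    intro r A
    rw [← algebraMap_smul ℂ r A, Complex.coe_algebraMap]
  have hU : ∀ s : ℝ, NormedSpace.exp ((-(Complex.I * (s : ℂ))) • H)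
      = exp (s • ((-Complex.I) • H)) := by
    intro s
    congr 1
    rw [hsmul, smul_smul]
    congr 1
    ring
  have hUc : ∀ s : ℝ, (exp (s • ((-Complex.I) • H)))ᴴ
      = exp ((-s) • ((-Complex.I) • H)) := by
    intro s
    rw [← Matrix.exp_conjTranspose]
    congr 1
    rw [hsmul, hsmul, Matrix.conjTranspose_smul, Matrix.conjTranspose_smul, hH.eq,
      smul_smul, smul_smul]
    congr 1
    simp [Complex.ext_iff]
  have hV : ∀ s : ℝ, NormedSpace.exp ((-(Complex.I * ((t - s : ℝ) : ℂ))) • K)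
      = exp ((t - s) • ((-Complex.I) • K)) := by
    intro s
    congr 1
    rw [hsmul, smul_smul]
    congr 1
    ring
  have hVc : ∀ s : ℝ, (exp ((t - s) • ((-Complex.I) • K)))ᴴ
      = exp ((s - t) • ((-Complex.I) • K)) := by
    intro s
    rw [← Matrix.exp_conjTranspose]
    congr 1
    rw [hsmul, hsmul, Matrix.conjTranspose_smul, Matrix.conjTranspose_smul, hK.eq,
      smul_smul, smul_smul]
    congr 1
    simp [Complex.ext_iff]
  simp only [hU, hV]
  simp only [hUc, hVc]
  set M : Matrix (Fin D) (Fin D) ℂ := (-Complex.I) • H with hM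
  set P : Matrix (Fin D) (Fin D) ℂ := (-Complex.I) • K with hP
  -- derivative of the matrix-valued function
  have key : ∀ s : ℝ,
      HasDerivAt
        (fun s : ℝ => exp ((s - t) • P) *
          (exp ((-s) • M) * O * exp (s • M)) * exp ((t - s) • P))
        ((-Complex.I) • (exp ((s - t) • P) *
          ((K - H) * (exp ((-s) • M) * O * exp (s • M)) -
            (exp ((-s) • M) * O * exp (s • M)) * (K - H)) * exp ((t - s) • P))) s := by
    intro s
    have h := duh_key M P O t s
    have hPM : P - M = (-Complex.I) • (K - H) := by rw [hM, hP, smul_sub]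
    rw [hPM, duh_smul] at h
    exact h
  -- entrywise derivative
  have keyE : ∀ s ∈ Set.uIcc (0 : ℝ) t,
      HasDerivAt
        (fun s : ℝ => (exp ((s - t) • P) *
          (exp ((-s) • M) * O * exp (s • M)) * exp ((t - s) • P)) i j)
        (-Complex.I * ((exp ((s - t) • P) *
          ((K - H) * (exp ((-s) • M) * O * exp (s • M)) -
            (exp ((-s) • M) * O * exp (s • M)) * (K - H)) * exp ((t - s) • P)) i j)) s := by
    intro s _
    exact ((entryCLM i j).hasFDerivAt).comp_hasDerivAt s (key s)
  -- continuity of the derivative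
  have cont_a : Continuous (fun s : ℝ => exp (s • M)) :=
    continuous_iff_continuousAt.mpr fun s => (duh_expDeriv M s).continuousAt
  have cont_b : Continuous (fun s : ℝ => exp ((-s) • M)) :=
    continuous_iff_continuousAt.mpr fun s => (duh_expDeriv_neg' M s).continuousAt
  have cont_c : Continuous (fun s : ℝ => exp ((t - s) • P)) :=
    continuous_iff_continuousAt.mpr fun s => (duh_expDeriv_sub' P t s).continuousAt
  have cont_d : Continuous (fun s : ℝ => exp ((s - t) • P)) :=
    continuous_iff_continuousAt.mpr fun s => (duh_expDeriv_sub P t s).continuousAt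
  have cont_G : Continuous (fun s : ℝ =>
      -Complex.I * ((exp ((s - t) • P) *
          ((K - H) * (exp ((-s) • M) * O * exp (s • M)) -
            (exp ((-s) • M) * O * exp (s • M)) * (K - H)) * exp ((t - s) • P)) i j)) := by
    apply continuous_const.mul
    apply ((entryCLM i j).continuous).comp
    exact ((cont_d.mul ((continuous_const.mul ((cont_b.mul continuous_const).mul cont_a)).sub
      (((cont_b.mul continuous_const).mul cont_a).mul continuous_const))).mul cont_c)
  have hint := intervalIntegral.integral_eq_sub_of_hasDerivAt keyE
    (cont_G.intervalIntegrable 0 t)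
  rw [intervalIntegral.integral_const_mul] at hint
  simp only [neg_zero, sub_self, zero_smul, NormedSpace.exp_zero, Matrix.one_mul,
    Matrix.mul_one, one_mul, mul_one] at hint
  rw [Matrix.sub_apply]
  linear_combination hint
end DuhamelAux
end

section
/- Let A_1,…,A_N and B_1,…,B_N be D×D complex matrices and for δ ∈ ℝ set Z_J(δ) = A_J + δ B_J, V(δ) = exp(Z_1(δ)) · exp(Z_2(δ)) ··· exp(Z_N(δ)) (ordered product), and W_J(δ) = exp(Z_{J+1}(δ)) ··· exp(Z_N(δ)) (the ordered product of the factors to the right of the J-th, with W_N(δ) = 1). Then δ ↦ V(δ) is differentiable and its derivative is V′(δ) = V(δ) · Σ_{J=1}^N W_J(δ)^{−1} · ( ∫_0^1 exp(−s Z_J(δ)) · B_J · exp(s Z_J(δ)) ds ) · W_J(δ). -/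
open NormedSpace intervalIntegral

/-- Componentwise (interval) integral of a matrix-valued function. -/
noncomputable def matIntegral {D : ℕ} (F : ℝ → Matrix (Fin D) (Fin D) ℂ) (a b : ℝ) :
    Matrix (Fin D) (Fin D) ℂ :=
  Matrix.of fun i j => ∫ s in a..b, F s i j

namespace ProdExpAux

attribute [local instance] Matrix.linftyOpNormedRing Matrix.linftyOpNormedAlgebra

variable {D : ℕ}

local notation "𝕄" => Matrix (Fin D) (Fin D) ℂ

noncomputable abbrev matTop : TopologicalSpace 𝕄 := PseudoMetricSpace.toUniformSpace.toTopologicalSpace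

attribute [local instance 2000] matTop

noncomputable def entryCLM (i j : Fin D) : 𝕄 →L[ℝ] ℂ where
  toFun M := M i j
  map_add' _ _ := rfl
  map_smul' _ _ := rfl
  cont := (continuous_apply j).comp (continuous_apply (A := fun _ : Fin D => Fin D → ℂ) i)

lemma key (A B : 𝕄) (δ δ' : ℝ) :
    exp (A + δ' • B) = exp (A + δ • B) + (δ' - δ) •
      ∫ s in (0:ℝ)..1, exp ((1 - s) • (A + δ • B)) * B * exp (s • (A + δ' • B)) := by
  set Z := A + δ • B with hZdef
  set Z' := A + δ' • B with hZ'def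
  have hZZ : Z' - Z = (δ' - δ) • B := by rw [hZdef, hZ'def]; module
  have hder : ∀ s : ℝ, HasDerivAt (fun s : ℝ => exp ((1 - s) • Z) * exp (s • Z'))
      ((δ' - δ) • (exp ((1 - s) • Z) * B * exp (s • Z'))) s := by
    intro s
    have h1 : HasDerivAt (fun s : ℝ => exp ((1 - s) • Z))
        (-(exp ((1 - s) • Z) * Z)) s := by
      have ha : HasDerivAt (fun t : ℝ => exp (t • Z)) (exp ((1 - s) • Z) * Z) (1 - s) := by
        exact hasDerivAt_exp_smul_const Z (1 - s)
      have hb : HasDerivAt (fun s : ℝ => 1 - s) (-1) s := by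
        simpa using (hasDerivAt_id s).const_sub (1 : ℝ)
      exact (ha.scomp s hb).congr_deriv (by simp)
    have h2 : HasDerivAt (fun s : ℝ => exp (s • Z')) (exp (s • Z') * Z') s := by
      exact hasDerivAt_exp_smul_const Z' s
    have hmul := h1.mul h2
    refine hmul.congr_deriv ?_
    have hc : exp (s • Z') * Z' = Z' * exp (s • Z') :=
      (((Commute.refl Z').smul_left s).exp_left).eq
    rw [hc]
    have h3 : (δ' - δ) • (exp ((1 - s) • Z) * B * exp (s • Z'))
        = exp ((1 - s) • Z) * ((δ' - δ) • B) * exp (s • Z') := by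
      rw [mul_smul_comm, smul_mul_assoc]
    rw [h3, ← hZZ]
    noncomm_ring
  have hcont : Continuous fun s : ℝ =>
      (δ' - δ) • (exp ((1 - s) • Z) * B * exp (s • Z')) := by
    refine (Continuous.mul (Continuous.mul ?_ continuous_const) ?_).const_smul (δ' - δ)
    · exact exp_continuous.comp ((continuous_const.sub continuous_id).smul continuous_const)
    · exact exp_continuous.comp (continuous_id.smul continuous_const)
  have hFTC := intervalIntegral.integral_eq_sub_of_hasDerivAt
    (f := fun s : ℝ => exp ((1 - s) • Z) * exp (s • Z'))
    (fun t _ => hder t) (hcont.intervalIntegrable 0 1)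
  rw [intervalIntegral.integral_smul] at hFTC
  simp only [sub_self, zero_smul, one_smul, exp_zero, one_mul, mul_one, sub_zero] at hFTC
  rw [hFTC]
  abel

lemma duhamel (A B : 𝕄) (δ : ℝ) :
    HasDerivAt (fun δ' : ℝ => exp (A + δ' • B))
      (exp (A + δ • B) *
        ∫ s in (0:ℝ)..1, exp ((-s) • (A + δ • B)) * B * exp (s • (A + δ • B))) δ := by
  set Z := A + δ • B with hZdef
  set g : ℝ → 𝕄 := fun x =>
    ∫ s in (0:ℝ)..1, exp ((1 - s) • Z) * B * exp (s • (A + x • B)) with hgdef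
  have hgc : Continuous g := by
    apply intervalIntegral.continuous_parametric_intervalIntegral_of_continuous'
    refine Continuous.mul (Continuous.mul ?_ continuous_const) ?_
    · exact exp_continuous.comp
        (((continuous_const.sub continuous_snd).smul continuous_const).comp continuous_id)
    · exact exp_continuous.comp
        (continuous_snd.smul (continuous_const.add (continuous_fst.smul continuous_const)))
  have hD : HasDerivAt (fun δ' : ℝ => exp (A + δ' • B)) (g δ) δ := by
    rw [hasDerivAt_iff_tendsto_slope]
    have heq : ∀ x ∈ ({δ}ᶜ : Set ℝ), g x = slope (fun δ' : ℝ => exp (A + δ' • B)) δ x := by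
      intro x hx
      have hx' : x - δ ≠ 0 := sub_ne_zero.2 hx
      rw [slope_def_module, key A B δ x, ← hZdef, add_sub_cancel_left, smul_smul,
        inv_mul_cancel₀ hx', one_smul]
    refine Filter.Tendsto.congr'
      (Filter.eventuallyEq_of_mem self_mem_nhdsWithin heq) ?_
    exact (hgc.tendsto δ).mono_left nhdsWithin_le_nhds
  convert hD using 1
  have hsplit : ∀ s : ℝ, exp ((1 - s) • Z) = exp Z * exp ((-s) • Z) := by
    intro s
    rw [← exp_add_of_commute ((Commute.refl Z).smul_right (-s))]
    congr 1
    module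
  have hInt : IntervalIntegrable (fun s : ℝ => exp ((-s) • Z) * B * exp (s • Z))
      MeasureTheory.volume 0 1 := by
    refine Continuous.intervalIntegrable ?_ 0 1
    refine Continuous.mul (Continuous.mul ?_ continuous_const) ?_
    · exact exp_continuous.comp (continuous_neg.smul continuous_const)
    · exact exp_continuous.comp (continuous_id.smul continuous_const)
  have hcomm := ((ContinuousLinearMap.mul ℝ (Matrix (Fin D) (Fin D) ℂ))
    (exp Z)).intervalIntegral_comp_comm hInt (a := 0) (b := 1)
  simp only [ContinuousLinearMap.mul_apply'] at hcomm
  rw [← hcomm, hgdef]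
  refine intervalIntegral.integral_congr fun s _ => ?_
  rw [hsplit s]
  noncomm_ring

lemma matIntegral_eq (F : ℝ → 𝕄) (hF : Continuous F) :
    matIntegral F 0 1 = ∫ s in (0:ℝ)..1, F s := by
  ext i j
  show ∫ s in (0:ℝ)..1, F s i j = (∫ s in (0:ℝ)..1, F s) i j
  exact (entryCLM i j).intervalIntegral_comp_comm (hF.intervalIntegrable 0 1)

lemma hasDerivAt_ofFn_prod {n : ℕ} {f : Fin n → ℝ → 𝕄} {f' : Fin n → 𝕄} {x : ℝ}
    (h : ∀ i, HasDerivAt (f i) (f' i) x) :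
    HasDerivAt (fun t => (List.ofFn fun i => f i t).prod)
      (∑ i : Fin n, ((List.ofFn fun j => f j x).take (i : ℕ)).prod * f' i *
        ((List.ofFn fun j => f j x).drop ((i : ℕ) + 1)).prod) x := by
  induction n with
  | zero => simpa using hasDerivAt_const x (1 : 𝕄)
  | succ n IH =>
    have hP := IH (f := fun i => f i.succ) (f' := fun i => f' i.succ) (fun i => h i.succ)
    simp only [List.ofFn_succ, List.prod_cons]
    refine ((h 0).mul hP).congr_deriv ?_
    rw [Fin.sum_univ_succ]
    simp [List.take_succ_cons, List.drop_succ_cons, Finset.mul_sum, mul_assoc, Fin.val_succ]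

lemma main {N : ℕ} (A B : Fin N → Matrix (Fin D) (Fin D) ℂ) (δ : ℝ) (i j : Fin D) :
    HasDerivAt (fun δ' => (List.ofFn fun J => exp (A J + δ' • B J)).prod i j)
      (((List.ofFn fun J => exp (A J + δ • B J)).prod *
        ∑ J : Fin N,
          ((List.ofFn fun J' => exp (A J' + δ • B J')).drop ((J : ℕ) + 1)).prod⁻¹ *
            matIntegral (fun s => exp ((-s) • (A J + δ • B J)) * B J *
              exp (s • (A J + δ • B J))) 0 1 *
            ((List.ofFn fun J' => exp (A J' + δ • B J')).drop ((J : ℕ) + 1)).prod) i j) δ := by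
  have hf : ∀ J : Fin N, HasDerivAt (fun x : ℝ => exp (A J + x • B J))
      (exp (A J + δ • B J) *
        ∫ s in (0:ℝ)..1,
          exp ((-s) • (A J + δ • B J)) * B J * exp (s • (A J + δ • B J))) δ :=
    fun J => duhamel (A J) (B J) δ
  have hV := hasDerivAt_ofFn_prod hf
  have hgoalD := (entryCLM i j).hasFDerivAt.comp_hasDerivAt δ hV
  set l : List (Matrix (Fin D) (Fin D) ℂ) := List.ofFn fun J' => exp (A J' + δ • B J')
    with hl
  have hWunit : ∀ J : Fin N, IsUnit ((l.drop ((J : ℕ) + 1)).prod) := by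
    intro J
    apply List.prod_isUnit
    intro m hm
    obtain ⟨J', hJ'⟩ := List.mem_ofFn.mp (List.mem_of_mem_drop hm)
    exact hJ' ▸ Matrix.isUnit_exp _
  have hsplit : ∀ J : Fin N,
      l.prod = (l.take (J : ℕ)).prod * (exp (A J + δ • B J) * (l.drop ((J : ℕ) + 1)).prod) := by
    intro J
    conv_lhs => rw [← List.take_append_drop (J : ℕ) l]
    rw [List.prod_append]
    congr 1
    rw [List.drop_eq_getElem_cons (by simp [hl] : (J : ℕ) < l.length), List.prod_cons]
    congr 1
    simp [hl]
  have hcont : ∀ J : Fin N, Continuous fun s : ℝ =>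
      exp ((-s) • (A J + δ • B J)) * B J * exp (s • (A J + δ • B J)) := by
    intro J
    refine Continuous.mul (Continuous.mul ?_ continuous_const) ?_
    · exact exp_continuous.comp (continuous_neg.smul continuous_const)
    · exact exp_continuous.comp (continuous_id.smul continuous_const)
  have hfinal : (l.prod *
      ∑ J : Fin N,
        ((l.drop ((J : ℕ) + 1)).prod)⁻¹ *
          matIntegral (fun s =>
            exp ((-s) • (A J + δ • B J)) * B J * exp (s • (A J + δ • B J))) 0 1 *
          (l.drop ((J : ℕ) + 1)).prod)
      = ∑ J : Fin N, (l.take (J : ℕ)).prod *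
          (exp (A J + δ • B J) *
            ∫ s in (0:ℝ)..1,
              exp ((-s) • (A J + δ • B J)) * B J * exp (s • (A J + δ • B J))) *
          (l.drop ((J : ℕ) + 1)).prod := by
    rw [Finset.mul_sum]
    refine Finset.sum_congr rfl fun J _ => ?_
    rw [matIntegral_eq _ (hcont J), hsplit J]
    set P := (l.take (J : ℕ)).prod
    set Wm := (l.drop ((J : ℕ) + 1)).prod
    set e := exp (A J + δ • B J)
    set M := ∫ s in (0:ℝ)..1,
      exp ((-s) • (A J + δ • B J)) * B J * exp (s • (A J + δ • B J))
    have hd := (Matrix.isUnit_iff_isUnit_det _).mp (hWunit J)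
    have h1 : P * (e * Wm) * (Wm⁻¹ * M * Wm) = P * (e * (Wm * (Wm⁻¹ * (M * Wm)))) := by
      noncomm_ring
    rw [h1, Matrix.mul_nonsing_inv_cancel_left _ _ hd]
    noncomm_ring
  rw [hfinal]
  exact hgoalD

end ProdExpAux

/-- **Derivative of a product of matrix exponentials.**
With `Z_J(δ) = A_J + δ B_J`, `V(δ) = exp(Z_1(δ)) ⋯ exp(Z_N(δ))` and
`W_J(δ) = exp(Z_{J+1}(δ)) ⋯ exp(Z_N(δ))`, the map `δ ↦ V(δ)` is differentiable with
derivative `V(δ) Σ_J W_J(δ)⁻¹ (∫_0^1 exp(−s Z_J(δ)) B_J exp(s Z_J(δ)) ds) W_J(δ)`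
(componentwise). -/
theorem hasDerivAt_prod_exp {D N : ℕ} (A B : Fin N → Matrix (Fin D) (Fin D) ℂ) :
    letI Z : Fin N → ℝ → Matrix (Fin D) (Fin D) ℂ := fun J δ => A J + δ • B J
    letI V : ℝ → Matrix (Fin D) (Fin D) ℂ :=
      fun δ => (List.ofFn fun J => NormedSpace.exp (Z J δ)).prod
    letI W : Fin N → ℝ → Matrix (Fin D) (Fin D) ℂ :=
      fun J δ => ((List.ofFn fun J' => NormedSpace.exp (Z J' δ)).drop ((J : ℕ) + 1)).prod
    ∀ (δ : ℝ) (i j : Fin D),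
      HasDerivAt (fun δ' => V δ' i j)
        ((V δ *
            ∑ J : Fin N,
              (W J δ)⁻¹ *
                matIntegral
                  (fun s =>
                    NormedSpace.exp ((-s) • Z J δ) * B J * NormedSpace.exp (s • Z J δ))
                  0 1 *
                W J δ) i j)
        δ := by
  intro δ i j
  exact ProdExpAux.main A B δ i j
end

section
/- Let A_1,…,A_N and B_1,…,B_N be skew-Hermitian D×D complex matrices and for δ ∈ ℝ set Z_J(δ) = A_J + δ B_J, V(δ) = exp(Z_1(δ)) · exp(Z_2(δ)) ··· exp(Z_N(δ)) (ordered product), and W_J(δ) = exp(Z_{J+1}(δ)) ··· exp(Z_N(δ)) (the ordered product of the factors to the right of the J-th, with W_N(δ) = 1); all these exponentials are unitary. Then for every unit vector ψ ∈ ℂ^D and every δ ≥ 0: ‖(V(δ) − V(0)) ψ‖₂ ≤ ∫_0^δ ‖ Σ_{J=1}^N W_J(δ′)† · ( ∫_0^1 exp(−s Z_J(δ′)) · B_J · exp(s Z_J(δ′)) ds ) · W_J(δ′) ψ ‖₂ dδ′. -/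
open scoped Matrix
/-- The Euclidean (`ℓ²`) norm of a vector in `ℂ^D`. -/
noncomputable def l2Norm {D : ℕ} (v : Fin D → ℂ) : ℝ :=
  Real.sqrt (∑ i, ‖v i‖ ^ 2)

/- ### Auxiliary results -/

open NormedSpace

set_option linter.unusedSectionVars false

section BanachAlgebra

variable {𝔸 : Type*} [NormedRing 𝔸] [NormedAlgebra ℝ 𝔸] [CompleteSpace 𝔸]

lemma npep_exp_continuous : Continuous (exp : 𝔸 → 𝔸) := by
  letI : NormedAlgebra ℚ 𝔸 := NormedAlgebra.restrictScalars ℚ ℝ 𝔸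
  exact exp_continuous

lemma npep_exp_sub_exp (X Y : 𝔸) :
    exp Y - exp X
      = ∫ s in (0:ℝ)..1, exp ((1 - s) • X) * (Y - X) * exp (s • Y) := by
  have hder : ∀ s : ℝ, HasDerivAt (fun s : ℝ => exp ((1 - s) • X) * exp (s • Y))
      (exp ((1 - s) • X) * (Y - X) * exp (s • Y)) s := by
    intro s
    have h1 : HasDerivAt (fun u : ℝ => exp (u • X)) (exp ((1 - s) • X) * X) (1 - s) :=
      hasDerivAt_exp_smul_const X (1 - s)
    have hg : HasDerivAt (fun s : ℝ => 1 - s) (-1 : ℝ) s := by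
      simpa using (hasDerivAt_id s).const_sub 1
    have h1' : HasDerivAt (fun s : ℝ => exp ((1 - s) • X))
        ((-1 : ℝ) • (exp ((1 - s) • X) * X)) s := h1.scomp s hg
    have h2 : HasDerivAt (fun s : ℝ => exp (s • Y)) (Y * exp (s • Y)) s :=
      hasDerivAt_exp_smul_const' Y s
    have := h1'.mul h2
    convert this using 1
    · rfl
    simp only [neg_one_smul]
    noncomm_ring
  have hcont : Continuous fun s : ℝ => exp ((1 - s) • X) * (Y - X) * exp (s • Y) := by
    have c1 : Continuous fun s : ℝ => (1 - s) • X :=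
      ((continuous_const.sub continuous_id).smul continuous_const)
    have c2 : Continuous fun s : ℝ => s • Y := continuous_id.smul continuous_const
    exact ((npep_exp_continuous.comp c1).mul continuous_const).mul (npep_exp_continuous.comp c2)
  have := intervalIntegral.integral_eq_sub_of_hasDerivAt (a := 0) (b := 1)
      (fun s _ => hder s) (hcont.intervalIntegrable 0 1)
  rw [this]
  simp [exp_zero]

lemma npep_hasDerivAt_exp_affine (A B : 𝔸) (δ₀ : ℝ) :
    HasDerivAt (fun δ : ℝ => exp (A + δ • B))
      (∫ s in (0:ℝ)..1,
        exp ((1 - s) • (A + δ₀ • B)) * B * exp (s • (A + δ₀ • B))) δ₀ := by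
  set Z : ℝ → 𝔸 := fun δ => A + δ • B with hZ
  set G : ℝ → 𝔸 := fun δ =>
    ∫ s in (0:ℝ)..1, exp ((1 - s) • Z δ₀) * B * exp (s • Z δ) with hG
  have hZc : Continuous Z := continuous_const.add (continuous_id.smul continuous_const)
  have hGc : Continuous G := by
    apply intervalIntegral.continuous_parametric_intervalIntegral_of_continuous
      (μ := MeasureTheory.volume)
      (f := fun δ s => exp ((1 - s) • Z δ₀) * B * exp (s • Z δ)) ?_ continuous_const
    have c1 : Continuous fun p : ℝ × ℝ => exp ((1 - p.2) • Z δ₀) :=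
      npep_exp_continuous.comp ((continuous_const.sub continuous_snd).smul continuous_const)
    have c2 : Continuous fun p : ℝ × ℝ => exp (p.2 • Z p.1) :=
      npep_exp_continuous.comp (continuous_snd.smul (hZc.comp continuous_fst))
    exact (c1.mul continuous_const).mul c2
  rw [hasDerivAt_iff_tendsto_slope]
  have heq : G =ᶠ[nhdsWithin δ₀ {δ₀}ᶜ] slope (fun δ => exp (Z δ)) δ₀ := by
    refine Filter.eventuallyEq_of_mem self_mem_nhdsWithin fun δ hδ => ?_
    have hδ' : δ - δ₀ ≠ 0 := sub_ne_zero.2 hδ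
    have hYX : Z δ - Z δ₀ = (δ - δ₀) • B := by
      simp only [hZ, add_sub_add_left_eq_sub, ← sub_smul]
    have key : exp (Z δ) - exp (Z δ₀) = (δ - δ₀) • G δ := by
      rw [npep_exp_sub_exp (Z δ₀) (Z δ), hG]
      rw [← intervalIntegral.integral_smul]
      refine intervalIntegral.integral_congr fun s _ => ?_
      rw [hYX]
      rw [mul_smul_comm, smul_mul_assoc]
    rw [slope_def_module, key, smul_smul, inv_mul_cancel₀ hδ', one_smul]
  have := ((hGc.tendsto δ₀).mono_left nhdsWithin_le_nhds).congr' heq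
  exact this

lemma npep_integral_eq (Z B : 𝔸) :
    (∫ s in (0:ℝ)..1, exp ((1 - s) • Z) * B * exp (s • Z))
      = exp Z * ∫ s in (0:ℝ)..1, exp ((-s) • Z) * B * exp (s • Z) := by
  have hcont : Continuous fun s : ℝ => exp ((-s) • Z) * B * exp (s • Z) := by
    have c1 : Continuous fun s : ℝ => exp ((-s) • Z) :=
      npep_exp_continuous.comp (continuous_neg.smul continuous_const)
    have c2 : Continuous fun s : ℝ => exp (s • Z) :=
      npep_exp_continuous.comp (continuous_id.smul continuous_const)
    exact (c1.mul continuous_const).mul c2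
  have hfac : ∀ s : ℝ, exp ((1 - s) • Z) = exp Z * exp ((-s) • Z) := by
    intro s
    letI : NormedAlgebra ℚ 𝔸 := NormedAlgebra.restrictScalars ℚ ℝ 𝔸
    have hc : Commute Z ((-s) • Z) := (Commute.refl Z).smul_right _
    rw [← exp_add_of_commute hc]
    congr 1
    rw [sub_smul, one_smul, neg_smul, sub_eq_add_neg]
  have h1 : (∫ s in (0:ℝ)..1, exp ((1 - s) • Z) * B * exp (s • Z))
      = ∫ s in (0:ℝ)..1, exp Z * (exp ((-s) • Z) * B * exp (s • Z)) := by
    refine intervalIntegral.integral_congr fun s _ => ?_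
    rw [hfac s]; noncomm_ring
  rw [h1]
  have := (ContinuousLinearMap.mul ℝ 𝔸 (exp Z)).intervalIntegral_comp_comm
      (μ := MeasureTheory.volume) (a := 0) (b := 1) (hcont.intervalIntegrable 0 1)
  simpa using this

lemma npep_hasDerivAt_exp_affine' (A B : 𝔸) (δ₀ : ℝ) :
    HasDerivAt (fun δ : ℝ => exp (A + δ • B))
      (exp (A + δ₀ • B) *
        ∫ s in (0:ℝ)..1,
          exp ((-s) • (A + δ₀ • B)) * B * exp (s • (A + δ₀ • B))) δ₀ := by
  have := npep_hasDerivAt_exp_affine A B δ₀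
  rwa [npep_integral_eq] at this

lemma npep_hasDerivAt_ofFn_prod : ∀ {n : ℕ} (f : Fin n → ℝ → 𝔸) (f' : Fin n → 𝔸) (δ : ℝ),
    (∀ J, HasDerivAt (f J) (f' J) δ) →
    HasDerivAt (fun t => (List.ofFn fun J => f J t).prod)
      (∑ J : Fin n,
        ((List.ofFn fun J' => f J' δ).take (J : ℕ)).prod * f' J *
          ((List.ofFn fun J' => f J' δ).drop ((J : ℕ) + 1)).prod) δ := by
  intro n
  induction n with
  | zero =>
    intro f f' δ _
    simpa using hasDerivAt_const δ (1 : 𝔸)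
  | succ n ih =>
    intro f f' δ h
    have hrest := ih (fun J => f J.succ) (fun J => f' J.succ) δ (fun J => h J.succ)
    have hmul := (h 0).mul hrest
    have hfun : (fun t => f 0 t * (List.ofFn fun J : Fin n => f J.succ t).prod)
        = fun t => (List.ofFn fun J => f J t).prod := by
      funext t
      rw [List.ofFn_succ, List.prod_cons]
    rw [show (f 0 * fun t => (List.ofFn fun J : Fin n => f J.succ t).prod) = _ from hfun] at hmul
    convert hmul using 1
    rw [Fin.sum_univ_succ]
    simp only [List.ofFn_succ, Fin.val_zero, Fin.val_succ, List.take_zero, List.prod_nil,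
      List.drop_succ_cons, List.take_succ_cons, List.prod_cons, List.drop_zero, one_mul]
    rw [Finset.mul_sum]
    congr 1
    refine Finset.sum_congr rfl fun J _ => ?_
    noncomm_ring

lemma npep_continuous_ofFn_drop_prod : ∀ {n : ℕ} (f : Fin n → ℝ → 𝔸) (k : ℕ),
    (∀ J, Continuous (f J)) →
    Continuous fun t => ((List.ofFn fun J => f J t).drop k).prod := by
  intro n
  induction n with
  | zero => intro f k _; simpa using continuous_const
  | succ n ih =>
    intro f k h
    match k with
    | 0 =>
      have : (fun t => ((List.ofFn fun J => f J t).drop 0).prod)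
          = fun t => f 0 t * ((List.ofFn fun J : Fin n => f J.succ t).drop 0).prod := by
        funext t; rw [List.ofFn_succ]; simp
      rw [this]
      exact (h 0).mul (ih (fun J => f J.succ) 0 (fun J => h J.succ))
    | k + 1 =>
      have : (fun t => ((List.ofFn fun J => f J t).drop (k + 1)).prod)
          = fun t => ((List.ofFn fun J : Fin n => f J.succ t).drop k).prod := by
        funext t; rw [List.ofFn_succ, List.drop_succ_cons]
      rw [this]
      exact ih (fun J => f J.succ) k (fun J => h J.succ)

end BanachAlgebra

section MatrixAux

attribute [local instance] Matrix.linftyOpSemiNormedRing Matrix.linftyOpNormedRing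
  Matrix.linftyOpNormedAlgebra

variable {D : ℕ}

local notation "𝕄" => Matrix (Fin D) (Fin D) ℂ

lemma npep_exp_skew (Z : 𝕄) (hZ : Zᴴ = -Z) :
    (exp Z)ᴴ * exp Z = 1 ∧ exp Z * (exp Z)ᴴ = 1 := by
  have h1 : (exp Z)ᴴ = exp (-Z) := by rw [← Matrix.exp_conjTranspose, hZ]
  constructor
  · rw [h1, ← Matrix.exp_add_of_commute _ _ ((Commute.refl Z).neg_left), neg_add_cancel,
      exp_zero]
  · rw [h1, ← Matrix.exp_add_of_commute _ _ ((Commute.refl Z).neg_right), add_neg_cancel,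
      exp_zero]

lemma npep_prod_unitary (l : List 𝕄) (h : ∀ M ∈ l, Mᴴ * M = 1 ∧ M * Mᴴ = 1) :
    (l.prod)ᴴ * l.prod = 1 ∧ l.prod * (l.prod)ᴴ = 1 := by
  induction l with
  | nil => simp
  | cons a l ih =>
    obtain ⟨ha1, ha2⟩ := h a List.mem_cons_self
    obtain ⟨hp1, hp2⟩ := ih fun M hM => h M (List.mem_cons_of_mem a hM)
    rw [List.prod_cons, Matrix.conjTranspose_mul]
    constructor
    · have : l.prodᴴ * aᴴ * (a * l.prod) = l.prodᴴ * (aᴴ * a) * l.prod := by noncomm_ring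
      rw [this, ha1, mul_one, hp1]
    · have : a * l.prod * (l.prodᴴ * aᴴ) = a * (l.prod * l.prodᴴ) * aᴴ := by noncomm_ring
      rw [this, hp2, mul_one, ha2]

lemma npep_l2Norm_eq (v : Fin D → ℂ) :
    l2Norm v = ‖(WithLp.equiv 2 (Fin D → ℂ)).symm v‖ := by
  rw [l2Norm, EuclideanSpace.norm_eq]
  simp

lemma npep_dot (w : Fin D → ℂ) : (∑ i, ‖w i‖ ^ 2 : ℝ) = (star w ⬝ᵥ w).re := by
  rw [dotProduct, Complex.re_sum]
  refine Finset.sum_congr rfl fun i _ => ?_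
  simp [Pi.star_apply, Complex.mul_re, Complex.sq_norm,
    Complex.normSq_apply]

lemma npep_mulVec_norm (U : 𝕄) (hU : Uᴴ * U = 1) (v : Fin D → ℂ) :
    l2Norm (U.mulVec v) = l2Norm v := by
  have key : star (U.mulVec v) ⬝ᵥ U.mulVec v = star v ⬝ᵥ v := by
    rw [Matrix.star_mulVec, Matrix.dotProduct_mulVec, Matrix.vecMul_vecMul, hU,
      Matrix.vecMul_one]
  rw [l2Norm, l2Norm, npep_dot, npep_dot, key]

lemma npep_matIntegral_eq (F : ℝ → 𝕄) (hF : Continuous F) (a b : ℝ) :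
    matIntegral F a b = ∫ s in a..b, F s := by
  funext i j
  set L : 𝕄 →L[ℝ] ℂ := LinearMap.toContinuousLinearMap
    { toFun := fun M : 𝕄 => M i j
      map_add' := fun _ _ => rfl
      map_smul' := fun _ _ => rfl } with hL
  have key : (∫ s in a..b, (F s) i j) = (∫ s in a..b, F s) i j := by
    have := L.intervalIntegral_comp_comm (μ := MeasureTheory.volume) (a := a) (b := b)
      (hF.intervalIntegrable a b)
    exact this
  show (∫ s in a..b, F s i j) = _
  rw [key]

end MatrixAux

section Main

attribute [local instance] Matrix.linftyOpSemiNormedRing Matrix.linftyOpNormedRing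
  Matrix.linftyOpNormedAlgebra

/-- **Perturbation bound for products of unitary exponentials.**
Let `A_J`, `B_J` be skew-Hermitian, `Z_J(δ) = A_J + δ B_J`,
`V(δ) = exp(Z_1(δ)) ⋯ exp(Z_N(δ))` and `W_J(δ) = exp(Z_{J+1}(δ)) ⋯ exp(Z_N(δ))`
(all unitary).  Then for every unit vector `ψ` and every `δ ≥ 0`,
`‖(V(δ) − V(0))ψ‖₂ ≤ ∫_0^δ ‖Σ_J W_J(δ')† (∫_0^1 exp(−s Z_J(δ')) B_J exp(s Z_J(δ')) ds) W_J(δ') ψ‖₂ dδ'`. -/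
theorem norm_prod_exp_perturbation {D N : ℕ} (A B : Fin N → Matrix (Fin D) (Fin D) ℂ)
    (hA : ∀ J, (A J)ᴴ = -(A J)) (hB : ∀ J, (B J)ᴴ = -(B J)) :
    letI Z : Fin N → ℝ → Matrix (Fin D) (Fin D) ℂ := fun J δ => A J + δ • B J
    letI V : ℝ → Matrix (Fin D) (Fin D) ℂ :=
      fun δ => (List.ofFn fun J => NormedSpace.exp (Z J δ)).prod
    letI W : Fin N → ℝ → Matrix (Fin D) (Fin D) ℂ :=
      fun J δ => ((List.ofFn fun J' => NormedSpace.exp (Z J' δ)).drop ((J : ℕ) + 1)).prod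
    ∀ (ψ : Fin D → ℂ), l2Norm ψ = 1 → ∀ (δ : ℝ), 0 ≤ δ →
      l2Norm ((V δ - V 0).mulVec ψ) ≤
        ∫ δ' in (0:ℝ)..δ,
          l2Norm
            ((∑ J : Fin N,
                (W J δ')ᴴ *
                  matIntegral
                    (fun s =>
                      NormedSpace.exp ((-s) • Z J δ') * B J *
                        NormedSpace.exp (s • Z J δ'))
                    0 1 *
                  W J δ').mulVec ψ) := by
  intro ψ hψ δ hδ
  set F : Fin N → ℝ → Matrix (Fin D) (Fin D) ℂ := fun J t => exp (A J + t • B J) with hFdef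
  set Vf : ℝ → Matrix (Fin D) (Fin D) ℂ := fun t => (List.ofFn fun J => F J t).prod with hVfdef
  set Wf : Fin N → ℝ → Matrix (Fin D) (Fin D) ℂ :=
    fun J t => ((List.ofFn fun J' => F J' t).drop ((J : ℕ) + 1)).prod with hWfdef
  set Pf : Fin N → ℝ → Matrix (Fin D) (Fin D) ℂ :=
    fun J t => ((List.ofFn fun J' => F J' t).take (J : ℕ)).prod with hPfdef
  set MJ : Fin N → ℝ → Matrix (Fin D) (Fin D) ℂ := fun J t =>
    ∫ s in (0:ℝ)..1,
      exp ((-s) • (A J + t • B J)) * B J * exp (s • (A J + t • B J)) with hMJdef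
  set SS : ℝ → Matrix (Fin D) (Fin D) ℂ :=
    fun t => ∑ J, (Wf J t)ᴴ * MJ J t * Wf J t with hSSdef
  -- skew-Hermiticity
  have hskew : ∀ (J : Fin N) (t : ℝ), (A J + t • B J)ᴴ = -(A J + t • B J) := by
    intro J t
    simp only [Matrix.conjTranspose_add, Matrix.conjTranspose_smul, hA J, hB J, star_trivial,
      smul_neg]
    abel
  have hUf : ∀ (J : Fin N) (t : ℝ), (F J t)ᴴ * F J t = 1 ∧ F J t * (F J t)ᴴ = 1 :=
    fun J t => npep_exp_skew _ (hskew J t)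
  have hmem : ∀ (t : ℝ) (M : Matrix (Fin D) (Fin D) ℂ),
      M ∈ (List.ofFn fun J' => F J' t) → Mᴴ * M = 1 ∧ M * Mᴴ = 1 := by
    intro t M hM
    rw [List.mem_ofFn] at hM
    obtain ⟨J, rfl⟩ := hM
    exact hUf J t
  have hWu : ∀ (J : Fin N) (t : ℝ), (Wf J t)ᴴ * Wf J t = 1 ∧ Wf J t * (Wf J t)ᴴ = 1 := by
    intro J t
    exact npep_prod_unitary _ fun M hM => hmem t M (List.mem_of_mem_drop hM)
  have hVu : ∀ t : ℝ, (Vf t)ᴴ * Vf t = 1 ∧ Vf t * (Vf t)ᴴ = 1 := by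
    intro t
    exact npep_prod_unitary _ fun M hM => hmem t M hM
  -- continuity facts
  have hFc : ∀ J : Fin N, Continuous (F J) := fun J =>
    npep_exp_continuous.comp (continuous_const.add (continuous_id.smul continuous_const))
  have hWc : ∀ J : Fin N, Continuous (Wf J) := fun J =>
    npep_continuous_ofFn_drop_prod F ((J : ℕ) + 1) hFc
  have hVc : Continuous Vf := by
    have := npep_continuous_ofFn_drop_prod F 0 hFc
    simp only [List.drop_zero] at this
    exact this
  have hMcont : ∀ J : Fin N, Continuous (MJ J) := by
    intro J
    apply intervalIntegral.continuous_parametric_intervalIntegral_of_continuous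
      (μ := MeasureTheory.volume)
      (f := fun t s => exp ((-s) • (A J + t • B J)) * B J * exp (s • (A J + t • B J)))
      ?_ continuous_const
    have c0 : Continuous fun p : ℝ × ℝ => A J + p.1 • B J :=
      continuous_const.add (continuous_fst.smul continuous_const)
    have c1 : Continuous fun p : ℝ × ℝ => exp ((-p.2) • (A J + p.1 • B J)) :=
      npep_exp_continuous.comp (continuous_snd.neg.smul c0)
    have c2 : Continuous fun p : ℝ × ℝ => exp (p.2 • (A J + p.1 • B J)) :=
      npep_exp_continuous.comp (continuous_snd.smul c0)
    exact (c1.mul continuous_const).mul c2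
  have hSc : Continuous SS := by
    refine continuous_finset_sum _ fun J _ => ?_
    exact (((hWc J).matrix_conjTranspose).mul (hMcont J)).mul (hWc J)
  -- the componentwise integral agrees with the Bochner integral
  have hMint : ∀ (J : Fin N) (t : ℝ),
      matIntegral
        (fun s => exp ((-s) • (A J + t • B J)) * B J * exp (s • (A J + t • B J))) 0 1
        = MJ J t := by
    intro J t
    apply npep_matIntegral_eq
    have c0 : Continuous fun s : ℝ => A J + t • B J := continuous_const
    have c1 : Continuous fun s : ℝ => exp ((-s) • (A J + t • B J)) :=
      npep_exp_continuous.comp (continuous_neg.smul continuous_const)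
    have c2 : Continuous fun s : ℝ => exp (s • (A J + t • B J)) :=
      npep_exp_continuous.comp (continuous_id.smul continuous_const)
    exact (c1.mul continuous_const).mul c2
  -- derivative of the product
  have hVder : ∀ t : ℝ, HasDerivAt Vf (Vf t * SS t) t := by
    intro t
    have hder := npep_hasDerivAt_ofFn_prod F (fun J => F J t * MJ J t) t
      (fun J => npep_hasDerivAt_exp_affine' (A J) (B J) t)
    convert hder using 1
    · rfl
    · rfl
    · rfl
    simp only [hSSdef]
    rw [Finset.mul_sum]
    refine Finset.sum_congr rfl fun J _ => ?_
    have hlt : (J : ℕ) < (List.ofFn fun J' => F J' t).length := by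
      simp [J.isLt]
    have hsplit : Vf t = Pf J t * F J t * Wf J t := by
      simp only [hVfdef, hPfdef, hWfdef]
      conv_lhs => rw [← List.take_append_drop (J : ℕ) (List.ofFn fun J' => F J' t)]
      rw [List.prod_append, List.drop_eq_getElem_cons hlt, List.prod_cons, ← mul_assoc]
      congr 2
      simp [List.getElem_ofFn]
    have h2 := (hWu J t).2
    calc Vf t * ((Wf J t)ᴴ * MJ J t * Wf J t)
        = Pf J t * F J t * (Wf J t * (Wf J t)ᴴ) * MJ J t * Wf J t := by
          rw [hsplit]; noncomm_ring
      _ = Pf J t * (F J t * MJ J t) * Wf J t := by rw [h2, mul_one]; noncomm_ring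
  -- move to Euclidean space
  set Lmv : Matrix (Fin D) (Fin D) ℂ →ₗ[ℝ] (Fin D → ℂ) :=
    { toFun := fun M => M.mulVec ψ
      map_add' := fun M1 M2 => Matrix.add_mulVec M1 M2 ψ
      map_smul' := fun c M => Matrix.smul_mulVec c M ψ } with hLmv
  set Φ : Matrix (Fin D) (Fin D) ℂ →L[ℝ] EuclideanSpace ℂ (Fin D) :=
    (((PiLp.continuousLinearEquiv 2 ℂ (fun _ : Fin D => ℂ)).symm.toContinuousLinearMap).restrictScalars
        ℝ).comp (LinearMap.toContinuousLinearMap Lmv) with hΦdef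
  have hΦ : ∀ M : Matrix (Fin D) (Fin D) ℂ,
      Φ M = (WithLp.equiv 2 (Fin D → ℂ)).symm (M.mulVec ψ) := fun M => rfl
  have hgder : ∀ t : ℝ, HasDerivAt (fun u => Φ (Vf u)) (Φ (Vf t * SS t)) t := fun t =>
    Φ.hasFDerivAt.comp_hasDerivAt t (hVder t)
  have hgc : Continuous fun t => Φ (Vf t * SS t) := Φ.continuous.comp (hVc.mul hSc)
  have hftc : (∫ t in (0:ℝ)..δ, Φ (Vf t * SS t)) = Φ (Vf δ) - Φ (Vf 0) :=
    intervalIntegral.integral_eq_sub_of_hasDerivAt (fun t _ => hgder t)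
      (hgc.intervalIntegrable 0 δ)
  have key : l2Norm ((Vf δ - Vf 0).mulVec ψ) ≤
      ∫ t in (0:ℝ)..δ,
        l2Norm
          ((∑ J : Fin N,
              (Wf J t)ᴴ *
                matIntegral
                  (fun s =>
                    exp ((-s) • (A J + t • B J)) * B J * exp (s • (A J + t • B J))) 0 1 *
                Wf J t).mulVec ψ) := by
    calc l2Norm ((Vf δ - Vf 0).mulVec ψ)
        = ‖Φ (Vf δ) - Φ (Vf 0)‖ := by
          rw [Matrix.sub_mulVec, npep_l2Norm_eq, hΦ, hΦ]; rfl
      _ = ‖∫ t in (0:ℝ)..δ, Φ (Vf t * SS t)‖ := by rw [hftc]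
      _ ≤ ∫ t in (0:ℝ)..δ, ‖Φ (Vf t * SS t)‖ :=
          intervalIntegral.norm_integral_le_integral_norm hδ
      _ = ∫ t in (0:ℝ)..δ, l2Norm ((SS t).mulVec ψ) := by
          refine intervalIntegral.integral_congr fun t _ => ?_
          rw [hΦ, ← npep_l2Norm_eq, ← Matrix.mulVec_mulVec,
            npep_mulVec_norm (Vf t) (hVu t).1]
      _ = _ := by
          refine intervalIntegral.integral_congr fun t _ => ?_
          have : SS t = ∑ J : Fin N,
              (Wf J t)ᴴ *
                matIntegral
                  (fun s =>
                    exp ((-s) • (A J + t • B J)) * B J * exp (s • (A J + t • B J))) 0 1 *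
                Wf J t := by
            simp only [hSSdef]
            exact Finset.sum_congr rfl fun J _ => by rw [hMint J t]
          rw [this]
  exact key
end Main
end
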